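/- arXiv:math/0206031 — 3 statements merged into one kernel-verified Lean document; each statement's English description precedes it below -/
import Mathlib

section
/- For any real number k ≥ 1 and any positive integers m, n, the k-th divisor function satisfies d_k(mn) ≤ d_k(m)·d_k(n), where d_k is the multiplicative function with d_k(p^a) = Γ(k+a)/(Γ(k)·a!) on prime powers. -/
/-- The `k`-th divisor function for real `k`, multiplicative with
`d_k(p^a) = Γ(k+a)/(Γ(k)·a!) = k(k+1)···(k+a-1)/a!`. -/
noncomputable def dReal (k : ℝ) (n : ℕ) : ℝ :=
  ∏ p ∈ n.factorization.support,
    (∏ j ∈ Finset.range (n.factorization p), (k + j)) / (Nat.factorial (n.factorization p))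

noncomputable def fAux (k : ℝ) (e : ℕ) : ℝ :=
  (∏ j ∈ Finset.range e, (k + j)) / (Nat.factorial e)

lemma fAux_pos (k : ℝ) (hk : 1 ≤ k) (e : ℕ) : 0 < fAux k e := by
  apply div_pos
  · exact Finset.prod_pos fun j _ => by positivity
  · exact_mod_cast Nat.factorial_pos e

lemma fAux_zero (k : ℝ) : fAux k 0 = 1 := by simp [fAux]

lemma fAux_succ (k : ℝ) (e : ℕ) :
    fAux k (e + 1) = fAux k e * ((k + e) / (e + 1)) := by
  simp only [fAux, Finset.prod_range_succ, Nat.factorial_succ, Nat.cast_mul]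
  rw [div_mul_div_comm]
  push_cast
  ring

lemma fAux_submul (k : ℝ) (hk : 1 ≤ k) (a b : ℕ) :
    fAux k (a + b) ≤ fAux k a * fAux k b := by
  induction b with
  | zero => simp [fAux_zero]
  | succ b ih =>
      have h1 : fAux k (a + (b + 1)) = fAux k (a + b) * ((k + (a + b)) / (a + b + 1)) := by
        have := fAux_succ k (a + b)
        rw [show a + (b + 1) = (a + b) + 1 by ring, this]
        push_cast; ring_nf
      rw [h1, fAux_succ k b]
      have hratio : (k + (a + b)) / ((a : ℝ) + b + 1) ≤ (k + b) / (b + 1) := by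
        rw [div_le_div_iff₀ (by positivity) (by positivity)]
        nlinarith [hk, (Nat.cast_nonneg a : (0:ℝ) ≤ a), (Nat.cast_nonneg b : (0:ℝ) ≤ b)]
      have hr0 : (0:ℝ) ≤ (k + (a + b)) / ((a : ℝ) + b + 1) := by positivity
      calc fAux k (a + b) * ((k + (a + b)) / ((a:ℝ) + b + 1))
          ≤ (fAux k a * fAux k b) * ((k + (a + b)) / ((a:ℝ) + b + 1)) := by
            exact mul_le_mul_of_nonneg_right ih hr0
        _ ≤ (fAux k a * fAux k b) * ((k + b) / (b + 1)) := by
            apply mul_le_mul_of_nonneg_left hratio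
            exact le_of_lt (mul_pos (fAux_pos k hk a) (fAux_pos k hk b))
        _ = fAux k a * (fAux k b * ((k + b) / (b + 1))) := by ring

lemma dReal_eq_prod (k : ℝ) (n : ℕ) (S : Finset ℕ) (hS : n.factorization.support ⊆ S) :
    dReal k n = ∏ p ∈ S, fAux k (n.factorization p) := by
  rw [dReal]
  apply Finset.prod_subset hS
  intro p _ hp
  have : n.factorization p = 0 := Finsupp.notMem_support_iff.mp hp
  simp [this, fAux]

theorem stmt_0 (k : ℝ) (hk : 1 ≤ k) (m n : ℕ) (hm : 0 < m) (hn : 0 < n) :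
    dReal k (m * n) ≤ dReal k m * dReal k n := by
  set S := m.factorization.support ∪ n.factorization.support with hSdef
  have hmn : (m * n).factorization = m.factorization + n.factorization :=
    Nat.factorization_mul hm.ne' hn.ne'
  have hsub : (m * n).factorization.support ⊆ S := by
    rw [hmn]; exact Finsupp.support_add
  have h1 : dReal k (m * n) = ∏ p ∈ S, fAux k ((m * n).factorization p) :=
    dReal_eq_prod k (m * n) S hsub
  have h2 : dReal k m = ∏ p ∈ S, fAux k (m.factorization p) :=
    dReal_eq_prod k m S (Finset.subset_union_left)
  have h3 : dReal k n = ∏ p ∈ S, fAux k (n.factorization p) :=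
    dReal_eq_prod k n S (Finset.subset_union_right)
  rw [h1, h2, h3, ← Finset.prod_mul_distrib]
  apply Finset.prod_le_prod
  · intro p _; exact le_of_lt (fAux_pos k hk _)
  · intro p _
    rw [hmn]
    simpa using fAux_submul k hk (m.factorization p) (n.factorization p)
end

section
/- For every positive integer k and every real number x ≥ 2, ∑_{n=1}^∞ (d_k(n)/n)·e^{-n/x} ≤ (e^{1/x} · ∑_{a=1}^∞ e^{-a/x}/a)^k, and this is at most (log 3x)^k. -/
/-- The `k`-th divisor function for a natural number `k`: the number of ordered
`k`-tuples of positive integers with product `n`; multiplicative with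
`d_k(p^a) = binom(k+a-1, a)`. -/
def dNat (k n : ℕ) : ℕ :=
  ∏ p ∈ n.factorization.support,
    Nat.choose (k + n.factorization p - 1) (n.factorization p)

section NT
open ArithmeticFunction Finset
open scoped ArithmeticFunction.zeta

lemma zeta_pow_mult (k : ℕ) : IsMultiplicative ((ζ : ArithmeticFunction ℕ) ^ k) := by
  induction k with
  | zero => simpa using (isMultiplicative_one (R := ℕ))
  | succ k ih => rw [pow_succ]; exact ih.mul isMultiplicative_zeta

lemma hockey (j a : ℕ) : ∑ b ∈ range (a + 1), (j + b).choose b = (j + a + 1).choose a := by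
  induction a with
  | zero => simp
  | succ a ih =>
    rw [Finset.sum_range_succ, ih, Nat.choose_succ_succ]; rfl

lemma zeta_pow_prime_pow {p : ℕ} (hp : p.Prime) (k : ℕ) (hk : 1 ≤ k) (a : ℕ) :
    ((ζ : ArithmeticFunction ℕ) ^ k) (p ^ a) = (k + a - 1).choose a := by
  induction k generalizing a with
  | zero => omega
  | succ k ih =>
    rcases Nat.eq_or_lt_of_le hk with h | h
    · -- k + 1 = 1, i.e. k = 0
      have hk0 : k = 0 := by omega
      subst hk0
      rw [pow_one, zeta_apply_ne (pow_ne_zero a hp.ne_zero)]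
      simp [Nat.choose_self]
    · have hk1 : 1 ≤ k := by omega
      rw [pow_succ, mul_zeta_apply, Nat.sum_divisors_prime_pow hp]
      simp_rw [fun b => ih hk1 b]
      have : ∀ b, (k + b - 1).choose b = (k - 1 + b).choose b := by
        intro b; congr 1; omega
      simp_rw [this]
      rw [hockey (k - 1) a]
      congr 1; omega

lemma dNat_eq_zeta_pow (k n : ℕ) (hk : 1 ≤ k) (hn : n ≠ 0) :
    dNat k n = ((ζ : ArithmeticFunction ℕ) ^ k) n := by
  rw [(zeta_pow_mult k).multiplicative_factorization _ hn, dNat, Finsupp.prod]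
  apply Finset.prod_congr rfl
  intro p hp
  rw [zeta_pow_prime_pow (Nat.prime_of_mem_primeFactors
    (by rwa [Nat.support_factorization] at hp)) k hk _]

lemma dNat_succ (k n : ℕ) (hk : 1 ≤ k) (hn : n ≠ 0) :
    dNat (k + 1) n = ∑ d ∈ n.divisors, dNat k d := by
  rw [dNat_eq_zeta_pow (k+1) n (by omega) hn, pow_succ, mul_zeta_apply]
  apply Finset.sum_congr rfl
  intro d hd
  rw [dNat_eq_zeta_pow k d hk (Nat.pos_of_mem_divisors hd).ne']

lemma dNat_one (n : ℕ) : dNat 1 n = 1 := by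
  simp [dNat]

end NT

section Analytic
open Real

lemma hasSum_S (x : ℝ) (hx : 2 ≤ x) :
    HasSum (fun a : ℕ+ => Real.exp (-(a : ℝ) / x) / a)
      (-Real.log (1 - Real.exp (-1 / x))) := by
  have hx0 : (0:ℝ) < x := by linarith
  set r := Real.exp (-1 / x) with hr
  have hr0 : 0 < r := Real.exp_pos _
  have hr1 : r < 1 := by
    apply Real.exp_lt_one_iff.2
    · rw [neg_div]; simp only [Left.neg_neg_iff]; positivity
  have h := hasSum_pow_div_log_of_abs_lt_one (x := r) (by rw [abs_of_pos hr0]; exact hr1)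
  rw [← Equiv.hasSum_iff (Equiv.pnatEquivNat.symm)]
  convert h using 1
  funext n
  simp only [Function.comp_apply, Equiv.pnatEquivNat_symm_apply]
  have h1 : ((n.succPNat : ℕ+) : ℝ) = (n : ℝ) + 1 := by
    rw [show ((n.succPNat : ℕ+) : ℕ) = n + 1 from Nat.succPNat_coe n]; push_cast; ring
  rw [h1]
  congr 1
  rw [hr, ← Real.exp_nat_mul]
  congr 1
  push_cast
  field_simp

lemma logbound_num {E l3 : ℝ} (hEpos : 0 < E) (hE2 : E * E = Real.exp 1)
    (hlog3 : 2 - Real.exp 1 / 3 ≤ l3) : E / 4 + 1 / E ≤ l3 := by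
  have he_ub := Real.exp_one_lt_d9
  have he_lb := Real.exp_one_gt_d9
  have hEub : E ≤ 1.649 := by nlinarith
  have hElb : 1.6487 ≤ E := by nlinarith
  have h8 : 1 / E ≤ 1 / 1.6487 := one_div_le_one_div_of_le (by norm_num) hElb
  have h9 : (1:ℝ) / 1.6487 ≤ 0.6066 := by norm_num
  have h10 : Real.exp 1 / 3 ≤ 2.7182818286 / 3 := by linarith
  linarith

lemma logbound_core (x t : ℝ) (hx : 2 ≤ x) (hT : t = 1 / x) :
    Real.exp t * (-Real.log (1 - Real.exp (-t))) ≤ Real.log 3 + Real.log x := by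
  have hx0 : (0:ℝ) < x := by linarith
  have ht0 : 0 < t := by rw [hT]; positivity
  have ht : t ≤ 1 / 2 := by
    rw [hT, div_le_div_iff₀ hx0 (by norm_num)]; linarith
  have hs : t / 2 < Real.sinh (t / 2) := Real.self_lt_sinh_iff.2 (by positivity)
  rw [Real.sinh_eq] at hs
  have h2 : Real.exp (t/2) * Real.exp (t/2) = Real.exp t := by
    rw [← Real.exp_add]; ring_nf
  have h3 : Real.exp (-(t/2)) * Real.exp (t/2) = 1 := by
    rw [← Real.exp_add]; simp
  have hE : t * Real.exp (t/2) ≤ Real.exp t - 1 := by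
    nlinarith [Real.exp_pos (t/2)]
  have het1 : 0 < Real.exp t - 1 := by
    nlinarith [Real.exp_pos (t/2), Real.exp_pos t]
  have hfac : 1 - Real.exp (-t) = Real.exp (-t) * (Real.exp t - 1) := by
    rw [Real.exp_neg]; field_simp
  have hlog1 : -Real.log (1 - Real.exp (-t)) = t - Real.log (Real.exp t - 1) := by
    rw [hfac, Real.log_mul (Real.exp_ne_zero _) (ne_of_gt het1), Real.log_exp]; ring
  have hlog2 : Real.log t + t / 2 ≤ Real.log (Real.exp t - 1) := by
    have := (Real.log_le_log_iff (by positivity : (0:ℝ) < t * Real.exp (t/2)) het1).2 hE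
    rwa [Real.log_mul (ne_of_gt ht0) (Real.exp_ne_zero _), Real.log_exp] at this
  have hlogt : -Real.log t = Real.log x := by
    rw [hT, one_div, Real.log_inv]; ring
  have hlx : 0 < Real.log x := Real.log_pos (by linarith)
  have hSle : -Real.log (1 - Real.exp (-t)) ≤ t / 2 + Real.log x := by
    rw [hlog1]; linarith
  have hexpt : Real.exp t ≤ Real.exp (1/2 : ℝ) := Real.exp_le_exp.2 ht
  have hEpos : (0:ℝ) < Real.exp (1/2 : ℝ) := Real.exp_pos _
  have hE2 : Real.exp (1/2 : ℝ) * Real.exp (1/2 : ℝ) = Real.exp 1 := by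
    rw [← Real.exp_add]; norm_num
  have h_a : Real.exp t * t / 2 ≤ Real.exp (1/2 : ℝ) / 4 := by
    have : Real.exp t * t ≤ Real.exp (1/2 : ℝ) * (1/2) :=
      mul_le_mul hexpt ht (le_of_lt ht0) (le_of_lt hEpos)
    linarith
  have hexp1 : Real.exp t - 1 ≤ t * Real.exp t := by
    have h1t := Real.add_one_le_exp (-t)
    have hmul : (-t + 1) * Real.exp t ≤ Real.exp (-t) * Real.exp t :=
      mul_le_mul_of_nonneg_right h1t (Real.exp_pos t).le
    rw [← Real.exp_add, neg_add_cancel, Real.exp_zero] at hmul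
    nlinarith
  have hlogxe : Real.log x ≤ x / Real.exp 1 := by
    have h6 : (0:ℝ) < x / Real.exp 1 := by positivity
    have h7 := Real.log_le_sub_one_of_pos h6
    rw [Real.log_div (ne_of_gt hx0) (Real.exp_ne_zero _), Real.log_exp] at h7
    linarith
  have htlx : t * Real.log x ≤ 1 / Real.exp 1 := by
    rw [hT, div_mul_eq_mul_div, one_mul, div_le_div_iff₀ hx0 (Real.exp_pos 1)]
    calc Real.log x * Real.exp 1 ≤ (x / Real.exp 1) * Real.exp 1 :=
          mul_le_mul_of_nonneg_right hlogxe (Real.exp_pos 1).le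
      _ = 1 * x := by field_simp
  have h_b : (Real.exp t - 1) * Real.log x ≤ 1 / Real.exp (1/2 : ℝ) := by
    calc (Real.exp t - 1) * Real.log x ≤ (t * Real.exp t) * Real.log x :=
          mul_le_mul_of_nonneg_right hexp1 hlx.le
      _ = Real.exp t * (t * Real.log x) := by ring
      _ ≤ Real.exp (1/2 : ℝ) * (1 / Real.exp 1) := by
          apply mul_le_mul hexpt htlx ?pos hEpos.le
          case pos =>
            have := mul_nonneg ht0.le hlx.le
            linarith
      _ = 1 / Real.exp (1/2 : ℝ) := by rw [← hE2]; field_simp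
  have hlog3 : 2 - Real.exp 1 / 3 ≤ Real.log 3 := by
    have h6 : (0:ℝ) < Real.exp 1 / 3 := by positivity
    have h7 := Real.log_le_sub_one_of_pos h6
    rw [Real.log_div (Real.exp_ne_zero _) (by norm_num), Real.log_exp] at h7
    linarith
  have hnum : Real.exp (1/2 : ℝ) / 4 + 1 / Real.exp (1/2 : ℝ) ≤ Real.log 3 :=
    logbound_num hEpos hE2 hlog3
  calc Real.exp t * (-Real.log (1 - Real.exp (-t)))
      ≤ Real.exp t * (t / 2 + Real.log x) :=
        mul_le_mul_of_nonneg_left hSle (Real.exp_pos t).le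
    _ = Real.exp t * t / 2 + Real.log x + (Real.exp t - 1) * Real.log x := by ring
    _ ≤ Real.log 3 + Real.log x := by linarith

lemma logbound (x : ℝ) (hx : 2 ≤ x) :
    Real.exp (1 / x) * (-Real.log (1 - Real.exp (-1 / x))) ≤ Real.log (3 * x) := by
  have hx0 : (0:ℝ) < x := by linarith
  have h := logbound_core x (1/x) hx rfl
  rw [Real.log_mul (by norm_num) (ne_of_gt hx0)]
  rw [show -1 / x = -(1/x) by ring]
  exact h

end Analytic

section Main

open Real

noncomputable def wE (x : ℝ) (n : ℕ) : ENNReal :=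
  ENNReal.ofReal (Real.exp (-(n : ℝ) / x) / n)

lemma wE_zero (x : ℝ) : wE x 0 = 0 := by
  simp [wE]

lemma wE_mul_le (x : ℝ) (hx : 2 ≤ x) (d m : ℕ) :
    wE x (d * m) ≤ ENNReal.ofReal (Real.exp (1 / x)) * wE x d * wE x m := by
  rcases Nat.eq_zero_or_pos d with rfl | hd
  · simp [wE_zero]
  rcases Nat.eq_zero_or_pos m with rfl | hm
  · simp [wE_zero]
  have hx0 : (0:ℝ) < x := by linarith
  have hd1 : (1:ℝ) ≤ (d:ℝ) := by exact_mod_cast hd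
  have hm1 : (1:ℝ) ≤ (m:ℝ) := by exact_mod_cast hm
  have hreal : Real.exp (-((d:ℝ) * (m:ℝ)) / x) / ((d:ℝ) * (m:ℝ)) ≤
      Real.exp (1 / x) * (Real.exp (-(d:ℝ) / x) / d) * (Real.exp (-(m:ℝ) / x) / m) := by
    have h1 : Real.exp (-((d:ℝ) * (m:ℝ)) / x) ≤
        Real.exp (1 / x) * Real.exp (-(d:ℝ) / x) * Real.exp (-(m:ℝ) / x) := by
      rw [← Real.exp_add, ← Real.exp_add]
      apply Real.exp_le_exp.2
      rw [← add_div, ← add_div, div_le_div_iff₀ hx0 hx0]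
      nlinarith [mul_nonneg (sub_nonneg.2 hd1) (sub_nonneg.2 hm1)]
    calc Real.exp (-((d:ℝ) * (m:ℝ)) / x) / ((d:ℝ) * (m:ℝ))
        ≤ (Real.exp (1 / x) * Real.exp (-(d:ℝ) / x) * Real.exp (-(m:ℝ) / x))
            / ((d:ℝ) * (m:ℝ)) := by
          apply div_le_div_of_nonneg_right h1 (by positivity)
      _ = Real.exp (1 / x) * (Real.exp (-(d:ℝ) / x) / d) * (Real.exp (-(m:ℝ) / x) / m) := by
          field_simp
  calc wE x (d * m) = ENNReal.ofReal (Real.exp (-((d:ℝ) * (m:ℝ)) / x) / ((d:ℝ) * (m:ℝ))) := by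
        rw [wE]; push_cast; ring_nf
    _ ≤ ENNReal.ofReal (Real.exp (1 / x) * (Real.exp (-(d:ℝ) / x) / d)
          * (Real.exp (-(m:ℝ) / x) / m)) := ENNReal.ofReal_le_ofReal hreal
    _ = ENNReal.ofReal (Real.exp (1 / x)) * wE x d * wE x m := by
        rw [ENNReal.ofReal_mul (by positivity), ENNReal.ofReal_mul (by positivity)]
        rfl

lemma sigma_pair_injective :
    Function.Injective (fun σ : Σ n : ℕ, {q : ℕ × ℕ // q ∈ n.divisorsAntidiagonal} =>
      (σ.2 : ℕ × ℕ)) := by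
  rintro ⟨n, q, hq⟩ ⟨n', q', hq'⟩ h
  simp only at h
  have hn : n = n' := by
    have h1 := (Nat.mem_divisorsAntidiagonal.1 hq).1
    have h2 := (Nat.mem_divisorsAntidiagonal.1 hq').1
    rw [← h1, ← h2, h]
  subst hn
  obtain rfl : q = q' := h
  rfl

lemma main_ennreal (x : ℝ) (hx : 2 ≤ x) (k : ℕ) (hk : 1 ≤ k) :
    ∑' n : ℕ, (dNat k n : ENNReal) * wE x n
      ≤ (ENNReal.ofReal (Real.exp (1 / x)) * ∑' a : ℕ, wE x a) ^ k := by
  set c := ENNReal.ofReal (Real.exp (1 / x)) with hc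
  set A := ∑' a : ℕ, wE x a with hA
  have hx0 : (0:ℝ) < x := by linarith
  have hc1 : (1 : ENNReal) ≤ c := ENNReal.one_le_ofReal.2 (Real.one_le_exp (by positivity))
  induction k with
  | zero => omega
  | succ k ih =>
    rcases Nat.eq_zero_or_pos k with rfl | hk1
    · -- base case k + 1 = 1
      simp only [zero_add, pow_one]
      have : ∀ n : ℕ, (dNat 1 n : ENNReal) * wE x n = wE x n := by
        intro n; rw [dNat_one]; simp
      rw [tsum_congr this]
      exact le_mul_of_one_le_left (by positivity) hc1
    · have ih' := ih hk1
      -- rewrite the summand using dNat_succ and divisorsAntidiagonal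
      have h1 : ∀ n : ℕ, (dNat (k+1) n : ENNReal) * wE x n
          = ∑ q ∈ n.divisorsAntidiagonal, (dNat k q.1 : ENNReal) * wE x n := by
        intro n
        rcases Nat.eq_zero_or_pos n with rfl | hn
        · simp [wE_zero]
        rw [dNat_succ k n hk1 hn.ne',
          Nat.sum_divisorsAntidiagonal (fun d _ => (dNat k d : ENNReal) * wE x n)]
        push_cast
        rw [Finset.sum_mul]
      rw [tsum_congr h1]
      -- convert to sigma then to pairs
      have h2 : ∑' n : ℕ, ∑ q ∈ n.divisorsAntidiagonal, (dNat k q.1 : ENNReal) * wE x n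
          = ∑' σ : Σ n : ℕ, {q : ℕ × ℕ // q ∈ n.divisorsAntidiagonal},
              (dNat k (σ.2 : ℕ × ℕ).1 : ENNReal) * wE x σ.1 := by
        rw [ENNReal.tsum_sigma']
        exact tsum_congr fun n => (Finset.tsum_subtype _ _).symm
      rw [h2]
      have h3 : ∑' σ : Σ n : ℕ, {q : ℕ × ℕ // q ∈ n.divisorsAntidiagonal},
              (dNat k (σ.2 : ℕ × ℕ).1 : ENNReal) * wE x σ.1
          ≤ ∑' p : ℕ × ℕ, (dNat k p.1 : ENNReal) * wE x (p.1 * p.2) := by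
        have heq : ∀ σ : Σ n : ℕ, {q : ℕ × ℕ // q ∈ n.divisorsAntidiagonal},
            (dNat k (σ.2 : ℕ × ℕ).1 : ENNReal) * wE x ((σ.2 : ℕ × ℕ).1 * (σ.2 : ℕ × ℕ).2)
              = (dNat k (σ.2 : ℕ × ℕ).1 : ENNReal) * wE x σ.1 := by
          rintro ⟨n, q, hq⟩
          simp only
          rw [(Nat.mem_divisorsAntidiagonal.1 hq).1]
        calc ∑' σ : Σ n : ℕ, {q : ℕ × ℕ // q ∈ n.divisorsAntidiagonal},
              (dNat k (σ.2 : ℕ × ℕ).1 : ENNReal) * wE x σ.1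
            = ∑' σ : Σ n : ℕ, {q : ℕ × ℕ // q ∈ n.divisorsAntidiagonal},
              (dNat k (σ.2 : ℕ × ℕ).1 : ENNReal) * wE x ((σ.2 : ℕ × ℕ).1 * (σ.2 : ℕ × ℕ).2) :=
              (tsum_congr heq).symm
          _ ≤ ∑' p : ℕ × ℕ, (dNat k p.1 : ENNReal) * wE x (p.1 * p.2) :=
              ENNReal.tsum_comp_le_tsum_of_injective sigma_pair_injective
                (fun p => (dNat k p.1 : ENNReal) * wE x (p.1 * p.2))
      apply le_trans h3
      have h4 : ∑' p : ℕ × ℕ, (dNat k p.1 : ENNReal) * wE x (p.1 * p.2)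
          ≤ ∑' p : ℕ × ℕ, c * ((dNat k p.1 : ENNReal) * wE x p.1) * wE x p.2 := by
        apply ENNReal.tsum_le_tsum
        intro p
        calc (dNat k p.1 : ENNReal) * wE x (p.1 * p.2)
            ≤ (dNat k p.1 : ENNReal) * (c * wE x p.1 * wE x p.2) :=
              mul_le_mul_right (wE_mul_le x hx p.1 p.2) _
          _ = c * ((dNat k p.1 : ENNReal) * wE x p.1) * wE x p.2 := by ring
      apply le_trans h4
      have h5 : ∑' p : ℕ × ℕ, c * ((dNat k p.1 : ENNReal) * wE x p.1) * wE x p.2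
          = (c * A) * ∑' d : ℕ, (dNat k d : ENNReal) * wE x d := by
        rw [ENNReal.tsum_prod']
        calc ∑' d : ℕ, ∑' m : ℕ, c * ((dNat k d : ENNReal) * wE x d) * wE x m
            = ∑' d : ℕ, (c * ((dNat k d : ENNReal) * wE x d)) * A := by
              exact tsum_congr fun d => ENNReal.tsum_mul_left
          _ = ∑' d : ℕ, (c * A) * ((dNat k d : ENNReal) * wE x d) := by
              exact tsum_congr fun d => by ring
          _ = (c * A) * ∑' d : ℕ, (dNat k d : ENNReal) * wE x d := ENNReal.tsum_mul_left
      rw [h5]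
      calc (c * A) * ∑' d : ℕ, (dNat k d : ENNReal) * wE x d
          ≤ (c * A) * (c * A) ^ k := mul_le_mul_right ih' _
        _ = (c * A) ^ (k + 1) := (pow_succ' (c * A) k).symm
end Main



section Final
open Real

theorem stmt_5 (k : ℕ) (hk : 0 < k) (x : ℝ) (hx : 2 ≤ x) :
    (∑' n : ℕ+, (dNat k n : ℝ) / n * Real.exp (-(n : ℝ) / x)) ≤
      (Real.exp (1 / x) * ∑' a : ℕ+, Real.exp (-(a : ℝ) / x) / a) ^ k ∧
    (Real.exp (1 / x) * ∑' a : ℕ+, Real.exp (-(a : ℝ) / x) / a) ^ k ≤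
      (Real.log (3 * x)) ^ k := by
  have hx0 : (0:ℝ) < x := by linarith
  have hS := hasSum_S x hx
  have hSsum : Summable (fun a : ℕ+ => Real.exp (-(a : ℝ) / x) / a) := hS.summable
  have hSval : (∑' a : ℕ+, Real.exp (-(a : ℝ) / x) / a)
      = -Real.log (1 - Real.exp (-1 / x)) := hS.tsum_eq
  set S := ∑' a : ℕ+, Real.exp (-(a : ℝ) / x) / a with hSdef
  have hSnn : 0 ≤ S := tsum_nonneg fun a => by positivity
  have hbase : Real.exp (1 / x) * S ≤ Real.log (3 * x) := by
    rw [hSval]; exact logbound x hx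
  have hbase_nn : 0 ≤ Real.exp (1 / x) * S := mul_nonneg (Real.exp_pos _).le hSnn
  refine ⟨?_, pow_le_pow_left₀ hbase_nn hbase k⟩
  by_cases hg : Summable (fun n : ℕ+ => (dNat k n : ℝ) / n * Real.exp (-(n : ℝ) / x))
  · -- relate to ℕ-indexed ENNReal sums
    have hco : Function.Injective (fun n : ℕ+ => (n : ℕ)) := fun a b h => PNat.coe_injective h
    have hA : (∑' a : ℕ, wE x a) = ENNReal.ofReal S := by
      have h1 : ∑' a : ℕ+, wE x (a : ℕ) = ∑' a : ℕ, wE x a := by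
        apply hco.tsum_eq
        intro n hn
        rcases Nat.eq_zero_or_pos n with rfl | hn'
        · simp [wE_zero] at hn
        · exact ⟨⟨n, hn'⟩, rfl⟩
      rw [← h1, hSdef, ENNReal.ofReal_tsum_of_nonneg (fun a => by positivity) hSsum]
      exact tsum_congr fun a => by rw [wE]
    have hL : ENNReal.ofReal (∑' n : ℕ+, (dNat k n : ℝ) / n * Real.exp (-(n : ℝ) / x))
        = ∑' n : ℕ, (dNat k n : ENNReal) * wE x n := by
      rw [ENNReal.ofReal_tsum_of_nonneg (fun n => by positivity) hg]
      have h2 : ∀ n : ℕ+, ENNReal.ofReal ((dNat k n : ℝ) / n * Real.exp (-(n : ℝ) / x))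
          = (dNat k (n : ℕ) : ENNReal) * wE x (n : ℕ) := by
        intro n
        have : (dNat k n : ℝ) / n * Real.exp (-(n : ℝ) / x)
            = (dNat k n : ℝ) * (Real.exp (-(n : ℝ) / x) / n) := by ring
        rw [this, ENNReal.ofReal_mul (Nat.cast_nonneg _), ENNReal.ofReal_natCast, wE]
      rw [tsum_congr h2]
      apply hco.tsum_eq (f := fun n : ℕ => (dNat k n : ENNReal) * wE x n)
      intro n hn
      rcases Nat.eq_zero_or_pos n with rfl | hn'
      · simp [wE_zero] at hn
      · exact ⟨⟨n, hn'⟩, rfl⟩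
    have hmain := main_ennreal x hx k hk
    rw [← hL, hA] at hmain
    have hrw : ENNReal.ofReal (Real.exp (1 / x)) * ENNReal.ofReal S
        = ENNReal.ofReal (Real.exp (1 / x) * S) :=
      (ENNReal.ofReal_mul (Real.exp_pos _).le).symm
    rw [hrw, ← ENNReal.ofReal_pow hbase_nn] at hmain
    exact (ENNReal.ofReal_le_ofReal_iff (pow_nonneg hbase_nn k)).1 hmain
  · rw [tsum_eq_zero_of_not_summable hg]
    exact pow_nonneg hbase_nn k
end Final
end

section
/- Let r_1, r_2, r_3 be positive real numbers and θ_2, θ_3 real numbers. Then |r_1 + r_2·e^{iθ_2} + r_3·e^{iθ_3}|² ≤ (r_1+r_2+r_3)² − 2·r_1·r_3·(1 − cos θ_3), and consequently |r_1 + r_2·e^{iθ_2} + r_3·e^{iθ_3}| ≤ (r_1+r_2+r_3) · exp(−r_1·r_3·(1−cos θ_3)/(r_1+r_2+r_3)²). -/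
open Complex

theorem stmt_6 (r1 r2 r3 θ2 θ3 : ℝ) (h1 : 0 < r1) (h2 : 0 < r2) (h3 : 0 < r3) :
    ‖(r1 : ℂ) + r2 * Complex.exp (θ2 * Complex.I) +
        r3 * Complex.exp (θ3 * Complex.I)‖ ^ 2 ≤
      (r1 + r2 + r3) ^ 2 - 2 * r1 * r3 * (1 - Real.cos θ3) ∧
    ‖(r1 : ℂ) + r2 * Complex.exp (θ2 * Complex.I) +
        r3 * Complex.exp (θ3 * Complex.I)‖ ≤
      (r1 + r2 + r3) * Real.exp (-(r1 * r3 * (1 - Real.cos θ3)) / (r1 + r2 + r3) ^ 2) := by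
  set z : ℂ := (r1 : ℂ) + r2 * Complex.exp (θ2 * Complex.I) + r3 * Complex.exp (θ3 * Complex.I)
    with hz
  have hsq : ‖z‖ ^ 2 = (r1 + r2 * Real.cos θ2 + r3 * Real.cos θ3) ^ 2 +
      (r2 * Real.sin θ2 + r3 * Real.sin θ3) ^ 2 := by
    rw [Complex.sq_norm, Complex.normSq_apply, hz]
    simp [Complex.exp_mul_I, Complex.add_re, Complex.add_im, Complex.mul_re, Complex.mul_im,
      Complex.cos_ofReal_re, Complex.sin_ofReal_re]
    ring
  have hc2 : Real.cos θ2 ≤ 1 := Real.cos_le_one _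
  have hc3 : Real.cos θ3 ≤ 1 := Real.cos_le_one _
  have hc23 : Real.cos (θ2 - θ3) ≤ 1 := Real.cos_le_one _
  have key : ‖z‖ ^ 2 ≤ (r1 + r2 + r3) ^ 2 - 2 * r1 * r3 * (1 - Real.cos θ3) := by
    rw [hsq]
    have expand : (r1 + r2 * Real.cos θ2 + r3 * Real.cos θ3) ^ 2 +
        (r2 * Real.sin θ2 + r3 * Real.sin θ3) ^ 2 =
        r1^2 + r2^2 * (Real.cos θ2 ^2 + Real.sin θ2 ^2)
          + r3^2 * (Real.cos θ3 ^2 + Real.sin θ3 ^2)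
          + 2 * r1 * r2 * Real.cos θ2 + 2 * r1 * r3 * Real.cos θ3
          + 2 * r2 * r3 * Real.cos (θ2 - θ3) := by
      rw [Real.cos_sub]; ring
    rw [expand, Real.cos_sq_add_sin_sq θ2, Real.cos_sq_add_sin_sq θ3]
    nlinarith [mul_pos h1 h2, mul_pos h2 h3]
  refine ⟨key, ?_⟩
  set S := r1 + r2 + r3 with hS
  have hSpos : 0 < S := by positivity
  set A := r1 * r3 * (1 - Real.cos θ3) with hA
  have hA0 : 0 ≤ A := by
    have := Real.cos_le_one θ3
    have : 0 ≤ 1 - Real.cos θ3 := by linarith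
    positivity
  have habs0 : (0:ℝ) ≤ ‖z‖ := norm_nonneg z
  -- A/S² ≤ 1/2 so S - A/S ≥ 0
  have h2A : 2 * A ≤ S ^ 2 := by nlinarith [sq_nonneg (‖z‖)]
  have step1 : ‖z‖ ≤ S * (1 - A / S ^ 2) := by
    have hrhs0 : 0 ≤ S * (1 - A / S ^ 2) := by
      have : A / S ^ 2 ≤ 1 / 2 := by
        rw [div_le_div_iff₀ (by positivity) (by norm_num)]; linarith
      nlinarith
    have : ‖z‖ ^ 2 ≤ (S * (1 - A / S ^ 2)) ^ 2 := by
      have hexp : (S * (1 - A / S ^ 2)) ^ 2 = S ^ 2 - 2 * A + (A / S) ^ 2 := by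
        field_simp; ring
      rw [hexp]
      have : (0:ℝ) ≤ (A / S) ^ 2 := sq_nonneg _
      calc ‖z‖ ^ 2 ≤ S ^ 2 - 2 * A := by linarith [key]
        _ ≤ S ^ 2 - 2 * A + (A / S) ^ 2 := by linarith
    exact le_of_pow_le_pow_left₀ (by norm_num) hrhs0 this
  have step2 : 1 - A / S ^ 2 ≤ Real.exp (-(A / S ^ 2)) := by
    have := Real.add_one_le_exp (-(A / S ^ 2))
    linarith
  calc ‖z‖ ≤ S * (1 - A / S ^ 2) := step1
    _ ≤ S * Real.exp (-(A / S ^ 2)) := by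
        exact mul_le_mul_of_nonneg_left step2 hSpos.le
    _ = S * Real.exp (-A / S ^ 2) := by rw [neg_div]
end
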